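/- Let (R, M) be a commutative Noetherian local ring. If the maximal ideal M is an internal direct sum of n cyclic R-modules, M = ⊕_{i=1}^n Rw_i, then every prime ideal of R is a direct sum of at most n cyclic R-modules. -/

import Mathlib

theorem primes_direct_sum_of_at_most_n_cyclics_of_noetherian_local
    {R : Type} [CommRing R] [IsLocalRing R] [IsNoetherianRing R]
    {n : ℕ} (w : Fin n → R)
    (hmem : ∀ i, w i ∈ IsLocalRing.maximalIdeal R)
    (hindep : iSupIndep (fun i => Ideal.span {w i}))
    (hsup : (⨆ i, Ideal.span {w i}) = IsLocalRing.maximalIdeal R)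
    (P : Ideal R) (hP : P.IsPrime) :
    ∃ (m : ℕ) (_ : m ≤ n) (v : Fin m → R), (∀ j, v j ∈ P) ∧
      iSupIndep (fun j => Ideal.span {v j}) ∧ (⨆ j, Ideal.span {v j}) = P := by
  -- key fact: w i * w j = 0 for i ≠ j
  have hmul : ∀ i j : Fin n, i ≠ j → w i * w j = 0 := by
    intro i j hij
    have h1 : w i * w j ∈ Ideal.span {w i} :=
      Ideal.mul_mem_right _ _ (Ideal.subset_span rfl)
    have h2 : w i * w j ∈ ⨆ k, ⨆ (_ : k ≠ i), Ideal.span {w k} := by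
      have : Ideal.span {w j} ≤ ⨆ k, ⨆ (_ : k ≠ i), Ideal.span {w k} :=
        le_iSup₂ (f := fun k (_ : k ≠ i) => Ideal.span {w k}) j (Ne.symm hij)
      exact this (Ideal.mul_mem_left _ _ (Ideal.subset_span rfl))
    exact (Submodule.mem_bot R).mp ((hindep i).le_bot ⟨h1, h2⟩)
  have hPle : P ≤ IsLocalRing.maximalIdeal R := IsLocalRing.le_maximalIdeal hP.ne_top
  by_cases hall : ∀ i, w i ∈ P
  · refine ⟨n, le_rfl, w, hall, hindep, le_antisymm (iSup_le fun i => ?_) ?_⟩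
    · exact (Ideal.span_singleton_le_iff_mem P).mpr (hall i)
    · rw [hsup] at *; exact hPle.trans hsup.ge
  · push_neg at hall
    obtain ⟨i0, hi0⟩ := hall
    set t := w i0 with ht
    have hwP : ∀ i, i ≠ i0 → w i ∈ P := by
      intro i hi
      rcases hP.mem_or_mem (show w i * t ∈ P by rw [hmul i i0 hi]; exact P.zero_mem) with h | h
      · exact h
      · exact absurd h hi0
    -- the intersection Q = P ⊓ span{t} is zero by Nakayama
    set Q : Ideal R := P ⊓ Ideal.span {t} with hQ
    -- every a ∈ maximal ideal satisfies a * t = c * t * t for some c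
    have hat : ∀ a ∈ IsLocalRing.maximalIdeal R, ∃ c, a * t = c * t * t := by
      intro a ha
      rw [← hsup] at ha
      refine Submodule.iSup_induction _ (motive := fun x => ∃ c, x * t = c * t * t) ha ?_ ⟨0, by ring⟩ ?_
      · intro i x hx
        rw [Ideal.mem_span_singleton] at hx
        obtain ⟨b, rfl⟩ := hx
        by_cases hii : i = i0
        · subst hii; exact ⟨b, by ring⟩
        · have h0 : w i * t = 0 := hmul i i0 hii
          exact ⟨0, by rw [mul_comm (w i) b, mul_assoc, h0]; ring⟩
      · rintro x y ⟨c, hc⟩ ⟨d, hd⟩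
        exact ⟨c + d, by rw [add_mul, hc, hd]; ring⟩
    have hQbot : Q = ⊥ := by
      apply Submodule.eq_bot_of_le_smul_of_le_jacobson_bot (IsLocalRing.maximalIdeal R) Q
        (IsNoetherian.noetherian Q)
      · intro x hx
        obtain ⟨hxP, hxt⟩ := hx
        rw [SetLike.mem_coe] at hxP
        rw [SetLike.mem_coe, Ideal.mem_span_singleton] at hxt
        obtain ⟨a, rfl⟩ := hxt
        have haM : a ∈ IsLocalRing.maximalIdeal R := by
          rw [IsLocalRing.mem_maximalIdeal, mem_nonunits_iff]
          intro hu
          obtain ⟨u, rfl⟩ := hu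
          exact hi0 (by
            have : ((u⁻¹ : Rˣ) : R) * (t * (u : R)) ∈ P := Ideal.mul_mem_left _ _ hxP
            rwa [mul_comm t _, ← mul_assoc, Units.inv_mul, one_mul] at this)
        obtain ⟨c, hc⟩ := hat a haM
        have hct : c * t ∈ Q := by
          constructor
          · rcases hP.mem_or_mem (show (c * t) * t ∈ P by rw [← hc, mul_comm]; exact hxP)
              with h | h
            · exact h
            · exact absurd h hi0
          · exact Ideal.mul_mem_left _ _ (Ideal.subset_span rfl)
        have : t * a = t * (c * t) := by rw [mul_comm t a, hc]; ring
        rw [this]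
        exact Submodule.smul_mem_smul (hmem i0) hct
      · exact IsLocalRing.maximalIdeal_le_jacobson ⊥
    -- the witnesses
    have hsz : Ideal.span ({0} : Set R) = ⊥ := by simp
    refine ⟨n, le_rfl, fun i => if i = i0 then 0 else w i, ?_, ?_, ?_⟩
    · intro j
      by_cases h : j = i0
      · simp [h]
      · simpa [h] using hwP j h
    · refine hindep.mono fun i => ?_
      by_cases h : i = i0 <;> simp [h, hsz]
    · apply le_antisymm
      · refine iSup_le fun i => ?_
        by_cases h : i = i0
        · simp [h, hsz]
        · simp only [h, if_false]
          exact (Ideal.span_singleton_le_iff_mem P).mpr (hwP i h)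
      · intro x hxP
        have hxM : x ∈ ⨆ i, Ideal.span {w i} := by rw [hsup]; exact hPle hxP
        have hsplit : (⨆ i, Ideal.span {w i}) ≤
            Ideal.span {t} ⊔ ⨆ i, Ideal.span {(if i = i0 then 0 else w i : R)} := by
          refine iSup_le fun i => ?_
          by_cases h : i = i0
          · subst h; exact le_sup_left
          · refine le_trans ?_ le_sup_right
            refine le_trans ?_ (le_iSup (fun i => Ideal.span {(if i = i0 then 0 else w i : R)}) i)
            simp [h]
        obtain ⟨y, hy, z, hz, hyz⟩ := Submodule.mem_sup.mp (hsplit hxM)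
        have hzP : z ∈ P := by
          refine (iSup_le fun i => ?_ : (⨆ i, Ideal.span {(if i = i0 then 0 else w i : R)}) ≤ P) hz
          by_cases h : i = i0
          · simp [h, hsz]
          · simp only [h, if_false]; exact (Ideal.span_singleton_le_iff_mem P).mpr (hwP i h)
        have hyQ : y ∈ Q := ⟨by have := P.sub_mem hxP hzP; rwa [← hyz, add_sub_cancel_right] at this, hy⟩
        have hy0 : y = 0 := by rwa [hQbot, Submodule.mem_bot] at hyQ
        rw [← hyz, hy0, zero_add]; exact hz
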